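/- At every point (q₂,q₃,α) of ℝ² × (−2,2), the point e(q₂,q₃,α) = (q, p) satisfies: (i) p_i = ∂Ŝ/∂q_i(q,α) for i = 1,2,3, (ii) the constraint ∂Ŝ/∂α(q,α) = 0, and (iii) the energy condition H(q,p) = ½(p₁² − p₂² − p₃²) = 0. Hence the image of e is contained in the energy surface H = 0 (e defines a constrained Lagrange submanifold). -/

import Mathlib

/-- The generating family of the toy model. -/
noncomputable def Shat (q₁ q₂ q₃ α : ℝ) : ℝ :=
  -α ^ 4 / 4 + q₁ * α + (1 / 2) * q₂ * α * Real.sqrt (4 - α ^ 2) + (1 / 2) * q₃ * α ^ 2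

/-- The `q₁` coordinate of the Lagrange-submanifold embedding of the toy model. -/
noncomputable def q₁star (q₂ q₃ α : ℝ) : ℝ :=
  α ^ 3 - q₃ * α - (1 / 2) * q₂ * Real.sqrt (4 - α ^ 2)
    + (1 / 2) * q₂ * α ^ 2 * (Real.sqrt (4 - α ^ 2))⁻¹

/-- At every point `(q₂,q₃,α)` of `ℝ² × (−2,2)`, the point `e(q₂,q₃,α) = (q,p)` with
`q = (q₁*(q₂,q₃,α), q₂, q₃)` and `p = (α, ½α√(4−α²), α²/2)` satisfies:
(i) `pᵢ = ∂Ŝ/∂qᵢ(q,α)` for `i = 1,2,3`, (ii) the constraint `∂Ŝ/∂α(q,α) = 0`, and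
(iii) the energy condition `H(q,p) = ½(p₁² − p₂² − p₃²) = 0`. -/
theorem eMap_mem_energy_surface (q₂ q₃ α : ℝ) (hα : α ∈ Set.Ioo (-2 : ℝ) 2) :
    deriv (fun t => Shat t q₂ q₃ α) (q₁star q₂ q₃ α) = α
    ∧ deriv (fun t => Shat (q₁star q₂ q₃ α) t q₃ α) q₂
        = (1 / 2) * α * Real.sqrt (4 - α ^ 2)
    ∧ deriv (fun t => Shat (q₁star q₂ q₃ α) q₂ t α) q₃ = α ^ 2 / 2
    ∧ deriv (fun a => Shat (q₁star q₂ q₃ α) q₂ q₃ a) α = 0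
    ∧ (1 / 2) * (α ^ 2 - ((1 / 2) * α * Real.sqrt (4 - α ^ 2)) ^ 2 - (α ^ 2 / 2) ^ 2) = 0 := by
  obtain ⟨h1, h2⟩ := hα
  have h4 : (0:ℝ) < 4 - α ^ 2 := by nlinarith
  set s := Real.sqrt (4 - α ^ 2) with hs_def
  have hs : s ^ 2 = 4 - α ^ 2 := Real.sq_sqrt h4.le
  have hs0 : s ≠ 0 := by
    have := Real.sqrt_pos.mpr h4
    exact ne_of_gt this
  refine ⟨?_, ?_, ?_, ?_, ?_⟩
  · have h : HasDerivAt (fun t : ℝ => Shat t q₂ q₃ α) α (q₁star q₂ q₃ α) := by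
      have := (((hasDerivAt_id (q₁star q₂ q₃ α)).mul_const α).const_add
        (-α ^ 4 / 4)).add_const ((1 / 2) * q₂ * α * s)
      have := this.add_const ((1 / 2) * q₃ * α ^ 2)
      simpa [Shat] using this
    exact h.deriv
  · have h : HasDerivAt (fun t : ℝ => Shat (q₁star q₂ q₃ α) t q₃ α)
        ((1 / 2) * α * s) q₂ := by
      have h0 : HasDerivAt (fun t : ℝ => (1 / 2) * t * α * s)
          ((1 / 2) * α * s) q₂ := by
        have := (((hasDerivAt_id q₂).const_mul ((1:ℝ) / 2)).mul_const α).mul_const s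
        simpa [mul_comm, mul_assoc, mul_left_comm] using this
      have := (h0.const_add (-α ^ 4 / 4 + q₁star q₂ q₃ α * α)).add_const
        ((1 / 2) * q₃ * α ^ 2)
      simpa [Shat, add_assoc] using this
    exact h.deriv
  · have h : HasDerivAt (fun t : ℝ => Shat (q₁star q₂ q₃ α) q₂ t α)
        (α ^ 2 / 2) q₃ := by
      have h0 : HasDerivAt (fun t : ℝ => (1 / 2) * t * α ^ 2) (α ^ 2 / 2) q₃ := by
        have := ((hasDerivAt_id q₃).const_mul ((1:ℝ) / 2)).mul_const (α ^ 2)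
        have h' : (1:ℝ) / 2 * 1 * α ^ 2 = α ^ 2 / 2 := by ring
        exact h' ▸ this
      have := h0.const_add
        (-α ^ 4 / 4 + q₁star q₂ q₃ α * α + (1 / 2) * q₂ * α * s)
      simpa [Shat, add_assoc] using this
    exact h.deriv
  · have hsq : HasDerivAt (fun a : ℝ => Real.sqrt (4 - a ^ 2)) (-α / s) α := by
      have hg : HasDerivAt (fun a : ℝ => 4 - a ^ 2) (-(2 * α)) α := by
        have := (hasDerivAt_pow 2 α).const_sub (4:ℝ)
        simpa using this
      have hsqrt := (Real.hasDerivAt_sqrt (ne_of_gt h4)).comp α hg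
      have : 1 / (2 * Real.sqrt (4 - α ^ 2)) * -(2 * α) = -α / s := by
        rw [← hs_def]; field_simp
      exact this ▸ hsqrt
    have hterm3 : HasDerivAt (fun a : ℝ => (1 / 2) * q₂ * a * Real.sqrt (4 - a ^ 2))
        (((1 / 2) * q₂) * s + ((1 / 2) * q₂ * α) * (-α / s)) α := by
      have ha : HasDerivAt (fun a : ℝ => (1 / 2) * q₂ * a) ((1 / 2) * q₂) α := by
        have := (hasDerivAt_id α).const_mul ((1 / 2) * q₂)
        simpa using this
      exact ha.mul hsq
    have hpow : HasDerivAt (fun a : ℝ => -a ^ 4 / 4) (-(4 * α ^ 3) / 4) α := by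
      have := ((hasDerivAt_pow 4 α).neg.div_const 4)
      simpa using this
    have hlin : HasDerivAt (fun a : ℝ => q₁star q₂ q₃ α * a) (q₁star q₂ q₃ α) α := by
      simpa using (hasDerivAt_id α).const_mul (q₁star q₂ q₃ α)
    have hq3 : HasDerivAt (fun a : ℝ => (1 / 2) * q₃ * a ^ 2) ((1 / 2) * q₃ * (2 * α)) α := by
      have := (hasDerivAt_pow 2 α).const_mul ((1 / 2) * q₃)
      simpa [mul_assoc] using this
    have h : HasDerivAt (fun a => Shat (q₁star q₂ q₃ α) q₂ q₃ a)
        (-(4 * α ^ 3) / 4 + q₁star q₂ q₃ α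
          + (((1 / 2) * q₂) * s + ((1 / 2) * q₂ * α) * (-α / s))
          + (1 / 2) * q₃ * (2 * α)) α := by
      exact ((hpow.add hlin).add hterm3).add hq3
    rw [h.deriv, q₁star, ← hs_def]
    field_simp
    ring_nf
  · linarith [sq_nonneg s, (by linear_combination (-(α ^ 2) / 8) * hs :
      (1 / 2) * (α ^ 2 - ((1 / 2) * α * s) ^ 2 - (α ^ 2 / 2) ^ 2) = 0)]
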